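/- Confluence of single-step parallel reduction (diamond property, general form): if T₀ reduces in one parallel step to T₁ and also to T₂ in environment L₀, and L₀ reduces in one parallel step to environments L₁ and L₂, then there exists a term T such that T₁ reduces to T in L₁ and T₂ reduces to T in L₂. -/
import Mathlib


inductive Bk | abbr | abst
deriving DecidableEq

inductive Fk | appl | cast
deriving DecidableEq

inductive Tm
| sort : Nat → Tm
| lref : Nat → Tm
| bind : Bk → Tm → Tm → Tm
| flat : Fk → Tm → Tm → Tm
deriving DecidableEq

inductive Lift : Nat → Nat → Tm → Tm → Prop
| sort (l m k) : Lift l m (.sort k) (.sort k)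
| lt {l m i} : i < l → Lift l m (.lref i) (.lref i)
| ge {l m i} : l ≤ i → Lift l m (.lref i) (.lref (i + m))
| bind {l m b W₁ W₂ T₁ T₂} : Lift l m W₁ W₂ → Lift (l + 1) m T₁ T₂ →
    Lift l m (.bind b W₁ T₁) (.bind b W₂ T₂)
| flat {l m f V₁ V₂ T₁ T₂} : Lift l m V₁ V₂ → Lift l m T₁ T₂ →
    Lift l m (.flat f V₁ T₁) (.flat f V₂ T₂)

inductive Env
| null : Env
| pair : Env → Bk → Tm → Env
deriving DecidableEq

inductive Drop : Nat → Nat → Env → Env → Prop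
| atom (l) : Drop l 0 .null .null
| pair {L₁ L₂ b W} : Drop 0 0 L₁ L₂ → Drop 0 0 (.pair L₁ b W) (.pair L₂ b W)
| drop {m L₁ L₂ b W} : Drop 0 m L₁ L₂ → Drop 0 (m + 1) (.pair L₁ b W) L₂
| skip {l m L₁ L₂ b W₁ W₂} : Drop l m L₁ L₂ → Lift l m W₂ W₁ →
    Drop (l + 1) m (.pair L₁ b W₁) (.pair L₂ b W₂)

inductive Cpr : Env → Tm → Tm → Prop
| sort {L k} : Cpr L (.sort k) (.sort k)
| lref {L i} : Cpr L (.lref i) (.lref i)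
| bind {L b W₁ W₂ T₁ T₂} : Cpr L W₁ W₂ → Cpr (.pair L b W₁) T₁ T₂ →
    Cpr L (.bind b W₁ T₁) (.bind b W₂ T₂)
| flat {L f V₁ V₂ T₁ T₂} : Cpr L V₁ V₂ → Cpr L T₁ T₂ →
    Cpr L (.flat f V₁ T₁) (.flat f V₂ T₂)
| delta {L K V₁ V₂ W₂ i} : Drop 0 i L (.pair K .abbr V₁) → Cpr K V₁ V₂ →
    Lift 0 (i + 1) V₂ W₂ → Cpr L (.lref i) W₂
| beta {L V₁ V₂ W₁ W₂ T₁ T₂} : Cpr L V₁ V₂ → Cpr L W₁ W₂ →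
    Cpr (.pair L .abst W₁) T₁ T₂ →
    Cpr L (.flat .appl V₁ (.bind .abst W₁ T₁)) (.bind .abbr (.flat .cast W₂ V₂) T₂)
| zeta {L V U₁ U₂ T₂} : Cpr (.pair L .abbr V) U₁ U₂ → Lift 0 1 T₂ U₂ →
    Cpr L (.bind .abbr V U₁) T₂
| eps {L U T₁ T₂} : Cpr L T₁ T₂ → Cpr L (.flat .cast U T₁) T₂
| theta {L V₁ V₂ W₂ U₁ U₂ T₁ T₂} : Cpr L V₁ V₂ → Lift 0 1 V₂ W₂ → Cpr L U₁ U₂ →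
    Cpr (.pair L .abbr U₁) T₁ T₂ →
    Cpr L (.flat .appl V₁ (.bind .abbr U₁ T₁)) (.bind .abbr U₂ (.flat .appl W₂ T₂))

inductive Lpr : Env → Env → Prop
| atom : Lpr .null .null
| pair {L₁ L₂ b W₁ W₂} : Lpr L₁ L₂ → Cpr L₁ W₁ W₂ → Lpr (.pair L₁ b W₁) (.pair L₂ b W₂)

inductive LsubR : Env → Env → Prop
| atom (L) : LsubR L .null
| pair {L₁ L₂ b W} : LsubR L₁ L₂ → LsubR (.pair L₁ b W) (.pair L₂ b W)
| beta {L₁ L₂ W V} : LsubR L₁ L₂ →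
    LsubR (.pair L₁ .abbr (.flat .cast W V)) (.pair L₂ .abst W)

-- ===== lift infrastructure =====

def lf (l m : Nat) : Tm → Tm
  | .sort k => .sort k
  | .lref i => if i < l then .lref i else .lref (i + m)
  | .bind b W T => .bind b (lf l m W) (lf (l + 1) m T)
  | .flat f V T => .flat f (lf l m V) (lf l m T)

def df (l m : Nat) : Tm → Tm
  | .sort k => .sort k
  | .lref i => if i < l then .lref i else .lref (i - m)
  | .bind b W T => .bind b (df l m W) (df (l + 1) m T)
  | .flat f V T => .flat f (df l m V) (df l m T)

lemma lift_lf (l m : Nat) (T : Tm) : Lift l m T (lf l m T) := by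
  induction T generalizing l with
  | sort k => exact Lift.sort l m k
  | lref i =>
    by_cases h : i < l
    · simpa [lf, h] using Lift.lt h
    · simpa [lf, h] using Lift.ge (Nat.le_of_not_lt h)
  | bind b W T ihW ihT => exact Lift.bind (ihW l) (ihT (l + 1))
  | flat f V T ihV ihT => exact Lift.flat (ihV l) (ihT l)

lemma lift_eq {l m : Nat} {T U : Tm} (h : Lift l m T U) : U = lf l m T := by
  induction h with
  | sort => rfl
  | lt h => simp [lf, h]
  | ge h => simp [lf, Nat.not_lt.mpr h]
  | bind _ _ ih1 ih2 => simp [lf, ih1, ih2]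
  | flat _ _ ih1 ih2 => simp [lf, ih1, ih2]

lemma lift_iff {l m : Nat} {T U : Tm} : Lift l m T U ↔ U = lf l m T :=
  ⟨lift_eq, fun h => h ▸ lift_lf l m T⟩

lemma df_lf (l m : Nat) (T : Tm) : df l m (lf l m T) = T := by
  induction T generalizing l with
  | sort k => rfl
  | lref i =>
    simp only [lf]; split_ifs with h <;> simp only [df] <;> split_ifs <;>
      simp only [Tm.lref.injEq] <;> omega
  | bind b W T ihW ihT => simp only [lf, df]; rw [ihW, ihT]
  | flat f V T ihV ihT => simp only [lf, df]; rw [ihV, ihT]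

lemma lf_inj {l m : Nat} {T₁ T₂ : Tm} (h : lf l m T₁ = lf l m T₂) : T₁ = T₂ := by
  have := congrArg (df l m) h
  rwa [df_lf, df_lf] at this

-- (a) l1 ≤ l2 ≤ l1 + m1
lemma lf_comp_be {l1 m1 l2 m2 : Nat} (h1 : l1 ≤ l2) (h2 : l2 ≤ l1 + m1) :
    ∀ T, lf l2 m2 (lf l1 m1 T) = lf l1 (m1 + m2) T := by
  intro T
  induction T generalizing l1 l2 with
  | sort k => rfl
  | lref i =>
    simp only [lf]; split_ifs <;> simp only [lf] <;> split_ifs <;>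
      simp only [Tm.lref.injEq] <;> omega
  | bind b W T ihW ihT =>
    simp only [lf]; rw [ihW h1 h2, ihT (by omega) (by omega)]
  | flat f V T ihV ihT => simp only [lf]; rw [ihV h1 h2, ihT h1 h2]

-- (b) l2 ≤ l1 : commute
lemma lf_comp_le {l1 m1 l2 m2 : Nat} (h : l2 ≤ l1) :
    ∀ T, lf l2 m2 (lf l1 m1 T) = lf (l1 + m2) m1 (lf l2 m2 T) := by
  intro T
  induction T generalizing l1 l2 with
  | sort k => rfl
  | lref i =>
    simp only [lf]; split_ifs <;> simp only [lf] <;> split_ifs <;>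
      simp only [Tm.lref.injEq] <;> omega
  | bind b W T ihW ihT =>
    simp only [lf]; rw [ihW h, ihT (by omega)]
    have h1 : l1 + 1 + m2 = l1 + m2 + 1 := by omega
    rw [h1]
  | flat f V T ihV ihT => simp only [lf]; rw [ihV h, ihT h]

-- (c) l1 + m1 ≤ l2, parametrized to avoid subtraction
lemma lf_comp_ge' {m1 m2 : Nat} :
    ∀ T (l1 d : Nat), lf (l1 + m1 + d) m2 (lf l1 m1 T) = lf l1 m1 (lf (l1 + d) m2 T) := by
  intro T
  induction T with
  | sort k => intro _ _; rfl
  | lref i =>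
    intro l1 d
    simp only [lf]; split_ifs <;> simp only [lf] <;> split_ifs <;>
      simp only [Tm.lref.injEq] <;> omega
  | bind b W T ihW ihT =>
    intro l1 d
    simp only [lf]
    have h1 : l1 + m1 + d + 1 = (l1 + 1) + m1 + d := by omega
    have h2 : l1 + d + 1 = (l1 + 1) + d := by omega
    rw [ihW l1 d, h1, h2, ihT (l1 + 1) d]
  | flat f V T ihV ihT =>
    intro l1 d
    simp only [lf]
    rw [ihV l1 d, ihT l1 d]

lemma lf_comp_ge {l1 m1 l2 m2 : Nat} (h : l1 + m1 ≤ l2) (T : Tm) :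
    lf l2 m2 (lf l1 m1 T) = lf l1 m1 (lf (l2 - m1) m2 T) := by
  obtain ⟨d, rfl⟩ : ∃ d, l2 = l1 + m1 + d := ⟨l2 - (l1 + m1), by omega⟩
  have : l1 + m1 + d - m1 = l1 + d := by omega
  rw [this]
  exact lf_comp_ge' T l1 d

lemma lf_div {l1 m1 l2 m2 : Nat} (h : l1 + m1 ≤ l2) :
    ∀ {A B : Tm}, lf l1 m1 A = lf l2 m2 B →
      ∃ C, A = lf (l2 - m1) m2 C ∧ B = lf l1 m1 C := by
  intro A
  induction A generalizing l1 l2 with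
  | sort k =>
    intro B e
    cases B
    case sort => refine ⟨.sort k, rfl, ?_⟩; simp only [lf] at e ⊢; rw [← e]
    all_goals (exfalso; simp only [lf] at e; (try split at e) <;> simp_all)
  | lref a =>
    intro B e
    cases B
    case lref b =>
      simp only [lf] at e
      split_ifs at e with h1 h2 h2 <;> simp only [Tm.lref.injEq] at e
      · -- a < l1, b < l2, a = b
        refine ⟨.lref a, ?_, ?_⟩ <;> simp only [lf] <;> split_ifs <;>
          simp only [Tm.lref.injEq] <;> omega
      · -- a < l1, b ≥ l2 : a = b + m2 ≥ l2 ≥ l1 : contradiction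
        exfalso; omega
      · -- a ≥ l1, b < l2 : a + m1 = b
        refine ⟨.lref a, ?_, ?_⟩ <;> simp only [lf] <;> split_ifs <;>
          simp only [Tm.lref.injEq] <;> omega
      · -- a ≥ l1, b ≥ l2 : a + m1 = b + m2 ; C = lref (b - m1)
        refine ⟨.lref (b - m1), ?_, ?_⟩ <;> simp only [lf] <;> split_ifs <;>
          simp only [Tm.lref.injEq] <;> omega
    all_goals (exfalso; simp only [lf] at e; (try split at e) <;> simp_all)
  | bind b W T ihW ihT =>
    intro B e
    cases B
    case bind b' W' T' =>
      simp only [lf, Tm.bind.injEq] at e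
      obtain ⟨e1, e2, e3⟩ := e
      obtain ⟨CW, c1, c2⟩ := ihW h e2
      obtain ⟨CT, d1, d2⟩ := ihT (show l1 + 1 + m1 ≤ l2 + 1 by omega) e3
      have hd : l2 + 1 - m1 = l2 - m1 + 1 := by omega
      rw [hd] at d1
      refine ⟨.bind b CW CT, ?_, ?_⟩ <;> simp only [lf]
      · rw [← c1, ← d1]
      · rw [e1, ← c2, ← d2]
    all_goals (exfalso; simp only [lf] at e; (try split at e) <;> simp_all)
  | flat f V T ihV ihT =>
    intro B e
    cases B
    case flat f' V' T' =>
      simp only [lf, Tm.flat.injEq] at e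
      obtain ⟨e1, e2, e3⟩ := e
      obtain ⟨CV, c1, c2⟩ := ihV h e2
      obtain ⟨CT, d1, d2⟩ := ihT h e3
      exact ⟨.flat f CV CT, by simp [lf, c1, d1], by simp [lf, ← e1, c2, d2]⟩
    all_goals (exfalso; simp only [lf] at e; (try split at e) <;> simp_all)
-- ===== sizes =====

def sz : Tm → Nat
  | .sort _ => 1
  | .lref _ => 1
  | .bind _ W T => sz W + sz T + 2
  | .flat _ V T => sz V + sz T + 1

def wz : Env → Nat
  | .null => 0
  | .pair L _ W => wz L + sz W + 1

lemma sz_pos (T : Tm) : 1 ≤ sz T := by cases T <;> simp [sz]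

-- ===== basic drop lemmas =====

lemma drop_refl (L : Env) : Drop 0 0 L L := by
  induction L with
  | null => exact Drop.atom 0
  | pair L b W ih => exact Drop.pair ih

lemma drop00 {L : Env} : ∀ {K : Env}, Drop 0 0 L K → K = L := by
  induction L with
  | null => intro K h; cases h; rfl
  | pair L b W ih =>
    intro K h
    cases h with
    | pair h' => rw [ih h']

lemma drop0_fun {i : Nat} : ∀ {L K₁ K₂ : Env}, Drop 0 i L K₁ → Drop 0 i L K₂ → K₁ = K₂ := by
  induction i with
  | zero => intro L K₁ K₂ h₁ h₂; rw [drop00 h₁, drop00 h₂]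
  | succ i ih =>
    intro L K₁ K₂ h₁ h₂
    cases h₁ with
    | drop h₁' =>
      cases h₂ with
      | drop h₂' => exact ih h₁' h₂'

lemma drop_succ {i : Nat} : ∀ {L K : Env} {b : Bk} {W : Tm},
    Drop 0 i L (.pair K b W) → Drop 0 (i + 1) L K := by
  induction i with
  | zero =>
    intro L K b W h
    rw [← drop00 h]
    exact Drop.drop (drop_refl _)
  | succ i ih =>
    intro L K b W h
    cases h with
    | drop h' => exact Drop.drop (ih h')

lemma drop_wz {i : Nat} : ∀ {L K : Env} {b : Bk} {V : Tm},
    Drop 0 i L (.pair K b V) → wz K + sz V < wz L := by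
  induction i with
  | zero =>
    intro L K b V h
    rw [← drop00 h]
    simp [wz]
  | succ i ih =>
    intro L K b V h
    cases h with
    | drop h' =>
      have := ih h'
      simp only [wz]
      omega

-- Lpr through drop
lemma lpr_drop {i : Nat} : ∀ {L L' K : Env} {b : Bk} {W : Tm},
    Lpr L L' → Drop 0 i L (.pair K b W) →
    ∃ K' W', Drop 0 i L' (.pair K' b W') ∧ Lpr K K' ∧ Cpr K W W' := by
  induction i with
  | zero =>
    intro L L' K b W hL h
    have e := drop00 h
    subst e
    cases hL with
    | pair hL' hW => exact ⟨_, _, Drop.pair (drop_refl _), hL', hW⟩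
  | succ i ih =>
    intro L L' K b W hL h
    cases h with
    | drop h' =>
      cases hL with
      | pair hL' hW =>
        obtain ⟨K', W', hd, hl, hc⟩ := ih hL' h'
        exact ⟨K', W', Drop.drop hd, hl, hc⟩

-- D6 : Drop l m L K → Drop 0 i K K₀ → l ≤ i → Drop 0 (i+m) L K₀
lemma drop_conf_ge {l m : Nat} {L K : Env} (h : Drop l m L K) :
    ∀ {i : Nat} {K₀ : Env}, Drop 0 i K K₀ → l ≤ i → Drop 0 (i + m) L K₀ := by
  induction h with
  | atom =>
    intro i K₀ h2 _
    simpa using h2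
  | pair h ih =>
    intro i K₀ h2 _
    rw [drop00 h] at h2
    simpa using h2
  | @drop m' L₁ L₂ b W h ih =>
    intro i K₀ h2 hli
    rw [show i + (m' + 1) = (i + m') + 1 from by omega]
    exact Drop.drop (ih h2 hli)
  | @skip l' m' L₁ L₂ b W₁ W₂ h hl ih =>
    intro i K₀ h2 hli
    obtain ⟨i', rfl⟩ : ∃ i', i = i' + 1 := ⟨i - 1, by omega⟩
    cases h2 with
    | drop h2' =>
      rw [show i' + 1 + m' = (i' + m') + 1 from by omega]
      exact Drop.drop (ih h2' (by omega))

-- D8 : Drop l m L K → Drop 0 (i+m) L K₀ → l ≤ i → Drop 0 i K K₀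
lemma drop_trans_ge {l m : Nat} {L K : Env} (h : Drop l m L K) :
    ∀ {i : Nat} {K₀ : Env}, Drop 0 (i + m) L K₀ → l ≤ i → Drop 0 i K K₀ := by
  induction h with
  | atom =>
    intro i K₀ h2 _
    simpa using h2
  | pair h ih =>
    intro i K₀ h2 _
    rw [drop00 h]
    simpa using h2
  | @drop m' L₁ L₂ b W h ih =>
    intro i K₀ h2 hli
    rw [show i + (m' + 1) = (i + m') + 1 from by omega] at h2
    cases h2 with
    | drop h2' => exact ih h2' hli
  | @skip l' m' L₁ L₂ b W₁ W₂ h hl ih =>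
    intro i K₀ h2 hli
    obtain ⟨i', rfl⟩ : ∃ i', i = i' + 1 := ⟨i - 1, by omega⟩
    rw [show i' + 1 + m' = (i' + m') + 1 from by omega] at h2
    cases h2 with
    | drop h2' => exact Drop.drop (ih h2' (by omega))
-- ===== skip-level drop composition =====

-- D5
lemma drop_conf_lt {d m : Nat} : ∀ {i : Nat} {L K K' : Env} {b : Bk} {V : Tm},
    Drop (i + d + 1) m L K → Drop 0 i K (.pair K' b V) →
    ∃ K'', Drop 0 i L (.pair K'' b (lf d m V)) ∧ Drop d m K'' K' := by
  intro i
  induction i with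
  | zero =>
    intro L K K' b V h h2
    cases h with
    | atom => cases h2
    | @skip _ _ L₁ L₂ b₀ W₁ W₂ h' hl =>
      rw [Nat.zero_add] at h' hl
      injection (drop00 h2) with e1 e2 e3
      refine ⟨L₁, ?_, by rw [e1]; exact h'⟩
      rw [e2, e3, ← lift_eq hl]
      exact Drop.pair (drop_refl _)
  | succ i ih =>
    intro L K K' b V h h2
    rw [show i + 1 + d + 1 = (i + d + 1) + 1 from by omega] at h
    cases h with
    | atom => cases h2
    | @skip _ _ L₁ L₂ b₀ W₁ W₂ h' hl =>
      cases h2 with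
      | drop h2' =>
        obtain ⟨K'', hd0, hdd⟩ := ih h' h2'
        exact ⟨K'', Drop.drop hd0, hdd⟩

-- D7
lemma drop_trans_lt {d m : Nat} : ∀ {i : Nat} {L K K' : Env} {b : Bk} {W : Tm},
    Drop (i + d + 1) m L K → Drop 0 i L (.pair K' b W) →
    ∃ K'' V'', Drop 0 i K (.pair K'' b V'') ∧ Drop d m K' K'' ∧ W = lf d m V'' := by
  intro i
  induction i with
  | zero =>
    intro L K K' b W h h2
    cases h with
    | atom => cases h2
    | @skip _ _ L₁ L₂ b₀ W₁ W₂ h' hl =>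
      rw [Nat.zero_add] at h' hl
      injection (drop00 h2) with e1 e2 e3
      refine ⟨L₂, W₂, ?_, by rw [e1]; exact h', by rw [e3]; exact lift_eq hl⟩
      rw [e2]
      exact Drop.pair (drop_refl _)
  | succ i ih =>
    intro L K K' b W h h2
    rw [show i + 1 + d + 1 = (i + d + 1) + 1 from by omega] at h
    cases h with
    | atom => cases h2
    | @skip _ _ L₁ L₂ b₀ W₁ W₂ h' hl =>
      cases h2 with
      | drop h2' =>
        obtain ⟨K'', V'', hd0, hdd, he⟩ := ih h' h2'
        exact ⟨K'', V'', Drop.drop hd0, hdd, he⟩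

-- ===== reflexivity =====

lemma cpr_refl (T : Tm) (L : Env) : Cpr L T T := by
  induction T generalizing L with
  | sort k => exact Cpr.sort
  | lref i => exact Cpr.lref
  | bind b W T ihW ihT => exact Cpr.bind (ihW L) (ihT _)
  | flat f V T ihV ihT => exact Cpr.flat (ihV L) (ihT L)

-- ===== reduction commutes with lift =====

lemma cpr_lift {K : Env} {T₁ T₂ : Tm} (h : Cpr K T₁ T₂) :
    ∀ {l m : Nat} {L : Env}, Drop l m L K → Cpr L (lf l m T₁) (lf l m T₂) := by
  induction h with
  | sort => intro l m L hd; exact Cpr.sort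
  | lref => intro l m L hd; simp only [lf]; split <;> exact Cpr.lref
  | @bind _ b W₁ W₂ _ _ _ _ ihW ihT =>
    intro l m L hd
    exact Cpr.bind (ihW hd) (ihT (Drop.skip hd (lift_lf l m W₁)))
  | flat _ _ ihV ihT =>
    intro l m L hd
    exact Cpr.flat (ihV hd) (ihT hd)
  | @delta K₀ K' V₁ V₂ W₂ i hdrop hV hlift ih =>
    intro l m L hd
    have eW : W₂ = lf 0 (i + 1) V₂ := lift_eq hlift
    subst eW
    by_cases hi : i < l
    · obtain ⟨d, rfl⟩ : ∃ d, l = i + d + 1 := ⟨l - i - 1, by omega⟩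
      simp only [lf, if_pos hi]
      obtain ⟨K'', hd0, hdd⟩ := drop_conf_lt hd hdrop
      refine Cpr.delta hd0 (ih hdd) (lift_iff.mpr ?_)
      rw [lf_comp_ge (l1 := 0) (m1 := i + 1) (l2 := i + d + 1) (m2 := m)
        (by omega) V₂, show i + d + 1 - (i + 1) = d from by omega]
    · simp only [lf, if_neg hi]
      refine Cpr.delta (drop_conf_ge hd hdrop (by omega)) hV (lift_iff.mpr ?_)
      rw [lf_comp_be (l1 := 0) (m1 := i + 1) (l2 := l) (m2 := m)
        (by omega) (by omega) V₂, show i + 1 + m = i + m + 1 from by omega]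
  | @beta _ _ _ W₁ _ _ _ _ _ _ ihV ihW ihT =>
    intro l m L hd
    exact Cpr.beta (ihV hd) (ihW hd) (ihT (Drop.skip hd (lift_lf l m W₁)))
  | @zeta _ V _ U₂ T₂ hU hlift ih =>
    intro l m L hd
    have eU : U₂ = lf 0 1 T₂ := lift_eq hlift
    subst eU
    refine Cpr.zeta (ih (Drop.skip hd (lift_lf l m V))) (lift_iff.mpr ?_)
    rw [lf_comp_ge (l1 := 0) (m1 := 1) (l2 := l + 1) (m2 := m)
      (by omega) T₂, show l + 1 - 1 = l from by omega]
  | eps _ ih =>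
    intro l m L hd
    exact Cpr.eps (ih hd)
  | @theta _ _ V₂ W₂ U₁ _ _ _ _ hlift _ _ ihV ihU ihT =>
    intro l m L hd
    have eW : W₂ = lf 0 1 V₂ := lift_eq hlift
    subst eW
    refine Cpr.theta (ihV hd) (lift_iff.mpr ?_) (ihU hd) (ihT (Drop.skip hd (lift_lf l m U₁)))
    rw [lf_comp_ge (l1 := 0) (m1 := 1) (l2 := l + 1) (m2 := m)
      (by omega) V₂, show l + 1 - 1 = l from by omega]

-- ===== reduction delifts =====

lemma cpr_inv_lift {L : Env} {U₁ U₂ : Tm} (h : Cpr L U₁ U₂) :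
    ∀ {l m : Nat} {K : Env} {T₁ : Tm}, Drop l m L K → U₁ = lf l m T₁ →
    ∃ T₂, U₂ = lf l m T₂ ∧ Cpr K T₁ T₂ := by
  induction h with
  | sort => intro l m K T₁ hd e; exact ⟨T₁, e, cpr_refl T₁ K⟩
  | lref => intro l m K T₁ hd e; exact ⟨T₁, e, cpr_refl T₁ K⟩
  | @bind _ b W₁ W₂ _ _ _ _ ihW ihT =>
    intro l m K T₁ hd e
    cases T₁
    case bind b' A B =>
      simp only [lf, Tm.bind.injEq] at e
      obtain ⟨eb, eW, eT⟩ := e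
      obtain ⟨A₂, eA2, cA⟩ := ihW hd eW
      obtain ⟨B₂, eB2, cB⟩ := ihT (Drop.skip hd (lift_iff.mpr eW)) eT
      subst eb
      exact ⟨.bind b A₂ B₂, by simp only [lf]; rw [← eA2, ← eB2], Cpr.bind cA cB⟩
    all_goals (exfalso; simp only [lf] at e; (try split at e) <;> simp_all)
  | @flat _ f V₁ V₂ _ _ _ _ ihV ihT =>
    intro l m K T₁ hd e
    cases T₁
    case flat f' A B =>
      simp only [lf, Tm.flat.injEq] at e
      obtain ⟨ef, eV, eT⟩ := e
      obtain ⟨A₂, eA2, cA⟩ := ihV hd eV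
      obtain ⟨B₂, eB2, cB⟩ := ihT hd eT
      subst ef
      exact ⟨.flat f A₂ B₂, by simp only [lf]; rw [← eA2, ← eB2], Cpr.flat cA cB⟩
    all_goals (exfalso; simp only [lf] at e; (try split at e) <;> simp_all)
  | @delta _ K' V₁ V₂ W₂ j hdrop hV hlift ih =>
    intro l m K T₁ hd e
    have eW : W₂ = lf 0 (j + 1) V₂ := lift_eq hlift
    subst eW
    cases T₁
    case lref i =>
      simp only [lf] at e
      split at e <;> rename_i hi <;> simp only [Tm.lref.injEq] at e <;> subst e
      · -- hi : j < l (i was substituted to j)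
        obtain ⟨d, rfl⟩ : ∃ d, l = j + d + 1 := ⟨l - j - 1, by omega⟩
        obtain ⟨K'', V'', hd0, hdd, eV⟩ := drop_trans_lt hd hdrop
        obtain ⟨V₂'', eV2, cV⟩ := ih hdd eV
        refine ⟨lf 0 (j + 1) V₂'', ?_, Cpr.delta hd0 cV (lift_lf 0 (j + 1) V₂'')⟩
        rw [eV2, lf_comp_ge (l1 := 0) (m1 := j + 1) (l2 := j + d + 1) (m2 := m)
          (by omega) V₂'', show j + d + 1 - (j + 1) = d from by omega]
      · -- ¬ i < l, j = i + m (j substituted away)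
        rename_i i
        refine ⟨lf 0 (i + 1) V₂, ?_,
          Cpr.delta (drop_trans_ge hd hdrop (by omega)) hV (lift_lf 0 (i + 1) V₂)⟩
        rw [lf_comp_be (l1 := 0) (m1 := i + 1) (l2 := l) (m2 := m)
          (by omega) (by omega) V₂, show i + 1 + m = i + m + 1 from by omega]
    all_goals (exfalso; simp only [lf] at e; (try split at e) <;> simp_all)
  | @beta _ _ V₂ W₁ W₂ _ _ _ _ _ ihV ihW ihT =>
    intro l m K T₁ hd e
    cases T₁
    case flat f' A X =>
      cases X
      case bind b' B C =>
        simp only [lf, Tm.flat.injEq, Tm.bind.injEq] at e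
        obtain ⟨ef, eV, eb, eW, eT⟩ := e
        obtain ⟨A₂, eA2, cA⟩ := ihV hd eV
        obtain ⟨B₂, eB2, cB⟩ := ihW hd eW
        obtain ⟨C₂, eC2, cC⟩ := ihT (Drop.skip hd (lift_iff.mpr eW)) eT
        subst ef; subst eb
        refine ⟨.bind .abbr (.flat .cast B₂ A₂) C₂, ?_, Cpr.beta cA cB cC⟩
        simp only [lf]
        rw [← eA2, ← eB2, ← eC2]
      all_goals (exfalso; simp only [lf] at e; (try split at e) <;> simp_all)
    all_goals (exfalso; simp only [lf] at e; (try split at e) <;> simp_all)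
  | @zeta _ V _ U₂ T₂ hU hlift ih =>
    intro l m K T₁ hd e
    have eU : U₂ = lf 0 1 T₂ := lift_eq hlift
    cases T₁
    case bind b' A B =>
      simp only [lf, Tm.bind.injEq] at e
      obtain ⟨eb, eV, eB⟩ := e
      obtain ⟨X, eX, cB⟩ := ih (Drop.skip hd (lift_iff.mpr eV)) eB
      rw [eU] at eX
      obtain ⟨C, eC1, eC2⟩ := lf_div (by omega) eX
      rw [show l + 1 - 1 = l from by omega] at eC1
      subst eb
      exact ⟨C, eC1, Cpr.zeta cB (lift_iff.mpr eC2)⟩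
    all_goals (exfalso; simp only [lf] at e; (try split at e) <;> simp_all)
  | @eps _ U _ _ hT ih =>
    intro l m K T₁ hd e
    cases T₁
    case flat f' A X =>
      simp only [lf, Tm.flat.injEq] at e
      obtain ⟨ef, eU, eT⟩ := e
      obtain ⟨T₂', e2, c⟩ := ih hd eT
      subst ef
      exact ⟨T₂', e2, Cpr.eps c⟩
    all_goals (exfalso; simp only [lf] at e; (try split at e) <;> simp_all)
  | @theta _ _ V₂ W₂ _ _ _ _ _ hlift _ _ ihV ihU ihT =>
    intro l m K T₁ hd e
    have eW : W₂ = lf 0 1 V₂ := lift_eq hlift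
    subst eW
    cases T₁
    case flat f' A X =>
      cases X
      case bind b' B C =>
        simp only [lf, Tm.flat.injEq, Tm.bind.injEq] at e
        obtain ⟨ef, eV, eb, eU, eT⟩ := e
        obtain ⟨A₂, eA2, cA⟩ := ihV hd eV
        obtain ⟨B₂, eB2, cB⟩ := ihU hd eU
        obtain ⟨C₂, eC2, cC⟩ := ihT (Drop.skip hd (lift_iff.mpr eU)) eT
        subst ef; subst eb
        refine ⟨.bind .abbr B₂ (.flat .appl (lf 0 1 A₂) C₂), ?_,
          Cpr.theta cA (lift_lf 0 1 A₂) cB cC⟩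
        simp only [lf]
        rw [← eB2, ← eC2, eA2, lf_comp_le (l1 := l) (m1 := m) (l2 := 0) (m2 := 1) (by omega) A₂]
      all_goals (exfalso; simp only [lf] at e; (try split at e) <;> simp_all)
    all_goals (exfalso; simp only [lf] at e; (try split at e) <;> simp_all)

-- ===== LsubR =====

lemma lsubr_refl (L : Env) : LsubR L L := by
  induction L with
  | null => exact LsubR.atom .null
  | pair L b W ih => exact LsubR.pair ih

lemma lsubr_drop_abbr {L₁ L₂ : Env} (h : LsubR L₁ L₂) :
    ∀ {i : Nat} {K₂ : Env} {V : Tm}, Drop 0 i L₂ (.pair K₂ .abbr V) →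
    ∃ K₁, Drop 0 i L₁ (.pair K₁ .abbr V) ∧ LsubR K₁ K₂ := by
  induction h with
  | atom => intro i K₂ V hd; cases hd
  | @pair L₁' L₂' b W hs ih =>
    intro i K₂ V hd
    cases hd with
    | pair h' =>
      rw [drop00 h'] at *
      exact ⟨L₁', Drop.pair (drop_refl _), hs⟩
    | drop h' =>
      obtain ⟨K₁, hd1, hs1⟩ := ih h'
      exact ⟨K₁, Drop.drop hd1, hs1⟩
  | @beta L₁' L₂' W V' hs ih =>
    intro i K₂ V hd
    cases hd with
    | drop h' =>
      obtain ⟨K₁, hd1, hs1⟩ := ih h'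
      exact ⟨K₁, Drop.drop hd1, hs1⟩

lemma lsubr_cpr_trans {L₂ : Env} {T₁ T₂ : Tm} (h : Cpr L₂ T₁ T₂) :
    ∀ {L₁ : Env}, LsubR L₁ L₂ → Cpr L₁ T₁ T₂ := by
  induction h with
  | sort => intro L₁ hs; exact Cpr.sort
  | lref => intro L₁ hs; exact Cpr.lref
  | bind _ _ ihW ihT => intro L₁ hs; exact Cpr.bind (ihW hs) (ihT (LsubR.pair hs))
  | flat _ _ ihV ihT => intro L₁ hs; exact Cpr.flat (ihV hs) (ihT hs)
  | delta hdrop _ hlift ih =>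
    intro L₁ hs
    obtain ⟨K₁, hd1, hs1⟩ := lsubr_drop_abbr hs hdrop
    exact Cpr.delta hd1 (ih hs1) hlift
  | beta _ _ _ ihV ihW ihT =>
    intro L₁ hs
    exact Cpr.beta (ihV hs) (ihW hs) (ihT (LsubR.pair hs))
  | zeta _ hlift ih => intro L₁ hs; exact Cpr.zeta (ih (LsubR.pair hs)) hlift
  | eps _ ih => intro L₁ hs; exact Cpr.eps (ih hs)
  | theta _ hlift _ _ ihV ihU ihT =>
    intro L₁ hs
    exact Cpr.theta (ihV hs) hlift (ihU hs) (ihT (LsubR.pair hs))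
-- ===== main confluence =====

def IH (N : Nat) : Prop := ∀ {L L₁ L₂ : Env} {T T₁ T₂ : Tm},
  wz L + sz T < N → Cpr L T T₁ → Cpr L T T₂ → Lpr L L₁ → Lpr L L₂ →
  ∃ T', Cpr L₁ T₁ T' ∧ Cpr L₂ T₂ T'

lemma case_lref_delta {La Lb L₀ K : Env} {V₁ V₂ W₂ : Tm} {i : Nat}
    (ih : IH (wz L₀ + sz (Tm.lref i)))
    (hdrop : Drop 0 i L₀ (.pair K .abbr V₁)) (hV : Cpr K V₁ V₂)
    (hlift : Lift 0 (i + 1) V₂ W₂)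
    (hLa : Lpr L₀ La) (hLb : Lpr L₀ Lb) :
    ∃ T, Cpr La (.lref i) T ∧ Cpr Lb W₂ T := by
  obtain ⟨K₁, W₁₁, hd₁, hl₁, hc₁⟩ := lpr_drop hLa hdrop
  obtain ⟨K₂, W₁₂, hd₂, hl₂, hc₂⟩ := lpr_drop hLb hdrop
  have hm : wz K + sz V₁ < wz L₀ + sz (Tm.lref i) := by
    have := drop_wz hdrop; omega
  obtain ⟨X, c1, c2⟩ := ih hm hc₁ hV hl₁ hl₂
  have eW : W₂ = lf 0 (i + 1) V₂ := lift_eq hlift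
  subst eW
  exact ⟨lf 0 (i + 1) X, Cpr.delta hd₁ c1 (lift_lf 0 (i + 1) X),
    cpr_lift c2 (drop_succ hd₂)⟩

lemma case_delta_delta {La Lb L₀ Ka Kb : Env} {V₁a V₂a W₂a V₁b V₂b W₂b : Tm} {i : Nat}
    (ih : IH (wz L₀ + sz (Tm.lref i)))
    (hdropa : Drop 0 i L₀ (.pair Ka .abbr V₁a)) (hVa : Cpr Ka V₁a V₂a)
    (hlifta : Lift 0 (i + 1) V₂a W₂a)
    (hdropb : Drop 0 i L₀ (.pair Kb .abbr V₁b)) (hVb : Cpr Kb V₁b V₂b)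
    (hliftb : Lift 0 (i + 1) V₂b W₂b)
    (hLa : Lpr L₀ La) (hLb : Lpr L₀ Lb) :
    ∃ T, Cpr La W₂a T ∧ Cpr Lb W₂b T := by
  injection (drop0_fun hdropa hdropb) with e1 e2 e3
  subst e1; subst e3
  obtain ⟨K₁, W₁₁, hd₁, hl₁, hc₁⟩ := lpr_drop hLa hdropa
  obtain ⟨K₂, W₁₂, hd₂, hl₂, hc₂⟩ := lpr_drop hLb hdropa
  have hm : wz Ka + sz V₁a < wz L₀ + sz (Tm.lref i) := by
    have := drop_wz hdropa; omega
  obtain ⟨X, c1, c2⟩ := ih hm hVa hVb hl₁ hl₂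
  have ea : W₂a = lf 0 (i + 1) V₂a := lift_eq hlifta
  have eb : W₂b = lf 0 (i + 1) V₂b := lift_eq hliftb
  subst ea; subst eb
  exact ⟨lf 0 (i + 1) X, cpr_lift c1 (drop_succ hd₁), cpr_lift c2 (drop_succ hd₂)⟩

lemma case_bind_bind {La Lb L₀ : Env} {b : Bk} {W₁ W₂a T₂a W₂b T₂b T₁' : Tm}
    (ih : IH (wz L₀ + sz (Tm.bind b W₁ T₁')))
    (hWa : Cpr L₀ W₁ W₂a) (hTa : Cpr (.pair L₀ b W₁) T₁' T₂a)
    (hWb : Cpr L₀ W₁ W₂b) (hTb : Cpr (.pair L₀ b W₁) T₁' T₂b)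
    (hLa : Lpr L₀ La) (hLb : Lpr L₀ Lb) :
    ∃ T, Cpr La (.bind b W₂a T₂a) T ∧ Cpr Lb (.bind b W₂b T₂b) T := by
  obtain ⟨W', cwa, cwb⟩ := ih (by simp only [sz]; omega) hWa hWb hLa hLb
  obtain ⟨T', cta, ctb⟩ := ih (by simp only [sz, wz]; omega) hTa hTb
    (Lpr.pair hLa hWa) (Lpr.pair hLb hWb)
  exact ⟨.bind b W' T', Cpr.bind cwa cta, Cpr.bind cwb ctb⟩

lemma case_bind_zeta {La Lb L₀ : Env} {V V₂ U₁ T₂a T₂b U₂b : Tm}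
    (ih : IH (wz L₀ + sz (Tm.bind .abbr V U₁)))
    (hV : Cpr L₀ V V₂) (hT : Cpr (.pair L₀ .abbr V) U₁ T₂a)
    (hU : Cpr (.pair L₀ .abbr V) U₁ U₂b) (hlb : Lift 0 1 T₂b U₂b)
    (hLa : Lpr L₀ La) (hLb : Lpr L₀ Lb) :
    ∃ T, Cpr La (.bind .abbr V₂ T₂a) T ∧ Cpr Lb T₂b T := by
  obtain ⟨X, c1, c2⟩ := ih (by simp only [sz, wz]; omega) hT hU
    (Lpr.pair hLa hV) (Lpr.pair hLb (cpr_refl V L₀))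
  obtain ⟨Y, eY, cY⟩ := cpr_inv_lift c2 (Drop.drop (drop_refl Lb)) (lift_eq hlb)
  exact ⟨Y, Cpr.zeta c1 (lift_iff.mpr eY), cY⟩

lemma case_zeta_zeta {La Lb L₀ : Env} {V U₁ U₂a T₂a U₂b T₂b : Tm}
    (ih : IH (wz L₀ + sz (Tm.bind .abbr V U₁)))
    (ha : Cpr (.pair L₀ .abbr V) U₁ U₂a) (hla : Lift 0 1 T₂a U₂a)
    (hb : Cpr (.pair L₀ .abbr V) U₁ U₂b) (hlb : Lift 0 1 T₂b U₂b)
    (hLa : Lpr L₀ La) (hLb : Lpr L₀ Lb) :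
    ∃ T, Cpr La T₂a T ∧ Cpr Lb T₂b T := by
  obtain ⟨X, c1, c2⟩ := ih (by simp only [sz, wz]; omega) ha hb
    (Lpr.pair hLa (cpr_refl V L₀)) (Lpr.pair hLb (cpr_refl V L₀))
  obtain ⟨Y₁, e1, cY1⟩ := cpr_inv_lift c1 (Drop.drop (drop_refl La)) (lift_eq hla)
  obtain ⟨Y₂, e2, cY2⟩ := cpr_inv_lift c2 (Drop.drop (drop_refl Lb)) (lift_eq hlb)
  have : Y₁ = Y₂ := lf_inj (e1.symm.trans e2)
  subst this
  exact ⟨Y₁, cY1, cY2⟩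

lemma case_flat_flat {La Lb L₀ : Env} {f : Fk} {V₁ V₂a T₂a V₂b T₂b T₁' : Tm}
    (ih : IH (wz L₀ + sz (Tm.flat f V₁ T₁')))
    (hVa : Cpr L₀ V₁ V₂a) (hTa : Cpr L₀ T₁' T₂a)
    (hVb : Cpr L₀ V₁ V₂b) (hTb : Cpr L₀ T₁' T₂b)
    (hLa : Lpr L₀ La) (hLb : Lpr L₀ Lb) :
    ∃ T, Cpr La (.flat f V₂a T₂a) T ∧ Cpr Lb (.flat f V₂b T₂b) T := by
  obtain ⟨V', cva, cvb⟩ := ih (by simp only [sz]; omega) hVa hVb hLa hLb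
  obtain ⟨T', cta, ctb⟩ := ih (by simp only [sz]; omega) hTa hTb hLa hLb
  exact ⟨.flat f V' T', Cpr.flat cva cta, Cpr.flat cvb ctb⟩

lemma case_flat_eps {La Lb L₀ : Env} {U U₂a T₂a T₂b T₁' : Tm}
    (ih : IH (wz L₀ + sz (Tm.flat .cast U T₁')))
    (hUa : Cpr L₀ U U₂a) (hTa : Cpr L₀ T₁' T₂a)
    (hTb : Cpr L₀ T₁' T₂b)
    (hLa : Lpr L₀ La) (hLb : Lpr L₀ Lb) :
    ∃ T, Cpr La (.flat .cast U₂a T₂a) T ∧ Cpr Lb T₂b T := by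
  obtain ⟨T', cta, ctb⟩ := ih (by simp only [sz]; omega) hTa hTb hLa hLb
  exact ⟨T', Cpr.eps cta, ctb⟩

lemma case_eps_eps {La Lb L₀ : Env} {U T₂a T₂b T₁' : Tm}
    (ih : IH (wz L₀ + sz (Tm.flat .cast U T₁')))
    (hTa : Cpr L₀ T₁' T₂a) (hTb : Cpr L₀ T₁' T₂b)
    (hLa : Lpr L₀ La) (hLb : Lpr L₀ Lb) :
    ∃ T, Cpr La T₂a T ∧ Cpr Lb T₂b T := by
  obtain ⟨T', cta, ctb⟩ := ih (by simp only [sz]; omega) hTa hTb hLa hLb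
  exact ⟨T', cta, ctb⟩

lemma case_flat_beta {La Lb L₀ : Env} {V₁ V₂a Ya W₁ T₁' V₂b W₂b T₂b : Tm}
    (ih : IH (wz L₀ + sz (Tm.flat .appl V₁ (Tm.bind .abst W₁ T₁'))))
    (hVa : Cpr L₀ V₁ V₂a) (hYa : Cpr L₀ (.bind .abst W₁ T₁') Ya)
    (hVb : Cpr L₀ V₁ V₂b) (hWb : Cpr L₀ W₁ W₂b) (hTb : Cpr (.pair L₀ .abst W₁) T₁' T₂b)
    (hLa : Lpr L₀ La) (hLb : Lpr L₀ Lb) :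
    ∃ T, Cpr La (.flat .appl V₂a Ya) T ∧ Cpr Lb (.bind .abbr (.flat .cast W₂b V₂b) T₂b) T := by
  cases hYa with
  | bind hWa hTa =>
    rename_i W₂a T₂a
    obtain ⟨V', cva, cvb⟩ := ih (by simp only [sz]; omega) hVa hVb hLa hLb
    obtain ⟨W', cwa, cwb⟩ := ih (by simp only [sz]; omega) hWa hWb hLa hLb
    obtain ⟨T', cta, ctb⟩ := ih (by simp only [sz, wz]; omega) hTa hTb
      (Lpr.pair hLa hWa) (Lpr.pair hLb hWb)
    refine ⟨.bind .abbr (.flat .cast W' V') T', Cpr.beta cva cwa cta, ?_⟩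
    exact Cpr.bind (Cpr.flat cwb cvb)
      (lsubr_cpr_trans ctb (LsubR.beta (lsubr_refl Lb)))

lemma case_beta_beta {La Lb L₀ : Env} {V₁ W₁ T₁' V₂a W₂a T₂a V₂b W₂b T₂b : Tm}
    (ih : IH (wz L₀ + sz (Tm.flat .appl V₁ (Tm.bind .abst W₁ T₁'))))
    (hVa : Cpr L₀ V₁ V₂a) (hWa : Cpr L₀ W₁ W₂a) (hTa : Cpr (.pair L₀ .abst W₁) T₁' T₂a)
    (hVb : Cpr L₀ V₁ V₂b) (hWb : Cpr L₀ W₁ W₂b) (hTb : Cpr (.pair L₀ .abst W₁) T₁' T₂b)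
    (hLa : Lpr L₀ La) (hLb : Lpr L₀ Lb) :
    ∃ T, Cpr La (.bind .abbr (.flat .cast W₂a V₂a) T₂a) T ∧
      Cpr Lb (.bind .abbr (.flat .cast W₂b V₂b) T₂b) T := by
  obtain ⟨V', cva, cvb⟩ := ih (by simp only [sz]; omega) hVa hVb hLa hLb
  obtain ⟨W', cwa, cwb⟩ := ih (by simp only [sz]; omega) hWa hWb hLa hLb
  obtain ⟨T', cta, ctb⟩ := ih (by simp only [sz, wz]; omega) hTa hTb
    (Lpr.pair hLa hWa) (Lpr.pair hLb hWb)
  exact ⟨.bind .abbr (.flat .cast W' V') T',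
    Cpr.bind (Cpr.flat cwa cva) (lsubr_cpr_trans cta (LsubR.beta (lsubr_refl La))),
    Cpr.bind (Cpr.flat cwb cvb) (lsubr_cpr_trans ctb (LsubR.beta (lsubr_refl Lb)))⟩

lemma case_flat_theta {La Lb L₀ : Env} {V₁ V₂a Ya U₁ T₁' V₂b W₂b U₂b T₂b : Tm}
    (ih : IH (wz L₀ + sz (Tm.flat .appl V₁ (Tm.bind .abbr U₁ T₁'))))
    (hVa : Cpr L₀ V₁ V₂a) (hYa : Cpr L₀ (.bind .abbr U₁ T₁') Ya)
    (hVb : Cpr L₀ V₁ V₂b) (hlb : Lift 0 1 V₂b W₂b) (hUb : Cpr L₀ U₁ U₂b)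
    (hTb : Cpr (.pair L₀ .abbr U₁) T₁' T₂b)
    (hLa : Lpr L₀ La) (hLb : Lpr L₀ Lb) :
    ∃ T, Cpr La (.flat .appl V₂a Ya) T ∧
      Cpr Lb (.bind .abbr U₂b (.flat .appl W₂b T₂b)) T := by
  have eWb : W₂b = lf 0 1 V₂b := lift_eq hlb
  subst eWb
  obtain ⟨V', cva, cvb⟩ := ih (by simp only [sz]; omega) hVa hVb hLa hLb
  cases hYa with
  | bind hUa hTa =>
    rename_i U₂a T₂a
    obtain ⟨U', cua, cub⟩ := ih (by simp only [sz]; omega) hUa hUb hLa hLb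
    obtain ⟨T', cta, ctb⟩ := ih (by simp only [sz, wz]; omega) hTa hTb
      (Lpr.pair hLa hUa) (Lpr.pair hLb hUb)
    refine ⟨.bind .abbr U' (.flat .appl (lf 0 1 V') T'),
      Cpr.theta cva (lift_lf 0 1 V') cua cta, ?_⟩
    exact Cpr.bind cub
      (Cpr.flat (cpr_lift cvb (Drop.drop (drop_refl Lb))) ctb)
  | zeta hXa hlza =>
    rename_i X₂a
    obtain ⟨X, ca, cb⟩ := ih (by simp only [sz, wz]; omega) hXa hTb
      (Lpr.pair hLa (cpr_refl U₁ L₀)) (Lpr.pair hLb hUb)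
    obtain ⟨Y', eY, cY⟩ := cpr_inv_lift ca (Drop.drop (drop_refl La)) (lift_eq hlza)
    refine ⟨.flat .appl V' Y', Cpr.flat cva cY, ?_⟩
    refine Cpr.zeta ?_ (lift_lf 0 1 (.flat .appl V' Y'))
    exact Cpr.flat (cpr_lift cvb (Drop.drop (drop_refl Lb))) (by rw [← eY]; exact cb)

lemma case_theta_theta {La Lb L₀ : Env} {V₁ U₁ T₁' V₂a W₂a U₂a T₂a V₂b W₂b U₂b T₂b : Tm}
    (ih : IH (wz L₀ + sz (Tm.flat .appl V₁ (Tm.bind .abbr U₁ T₁'))))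
    (hVa : Cpr L₀ V₁ V₂a) (hla : Lift 0 1 V₂a W₂a) (hUa : Cpr L₀ U₁ U₂a)
    (hTa : Cpr (.pair L₀ .abbr U₁) T₁' T₂a)
    (hVb : Cpr L₀ V₁ V₂b) (hlb : Lift 0 1 V₂b W₂b) (hUb : Cpr L₀ U₁ U₂b)
    (hTb : Cpr (.pair L₀ .abbr U₁) T₁' T₂b)
    (hLa : Lpr L₀ La) (hLb : Lpr L₀ Lb) :
    ∃ T, Cpr La (.bind .abbr U₂a (.flat .appl W₂a T₂a)) T ∧
      Cpr Lb (.bind .abbr U₂b (.flat .appl W₂b T₂b)) T := by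
  have eWa : W₂a = lf 0 1 V₂a := lift_eq hla
  have eWb : W₂b = lf 0 1 V₂b := lift_eq hlb
  subst eWa; subst eWb
  obtain ⟨V', cva, cvb⟩ := ih (by simp only [sz]; omega) hVa hVb hLa hLb
  obtain ⟨U', cua, cub⟩ := ih (by simp only [sz]; omega) hUa hUb hLa hLb
  obtain ⟨T', cta, ctb⟩ := ih (by simp only [sz, wz]; omega) hTa hTb
    (Lpr.pair hLa hUa) (Lpr.pair hLb hUb)
  exact ⟨.bind .abbr U' (.flat .appl (lf 0 1 V') T'),
    Cpr.bind cua (Cpr.flat (cpr_lift cva (Drop.drop (drop_refl La))) cta),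
    Cpr.bind cub (Cpr.flat (cpr_lift cvb (Drop.drop (drop_refl Lb))) ctb)⟩

theorem conf_aux : ∀ N : Nat, IH N := by
  intro N
  induction N using Nat.strong_induction_on with
  | _ N ihN =>
  intro L₀ L₁ L₂ T₀ T₁ T₂ hn h₁ h₂ hL₁ hL₂
  have ih : IH (wz L₀ + sz T₀) := ihN _ hn
  cases h₁ with
  | sort =>
    cases h₂ with
    | sort => exact ⟨.sort _, Cpr.sort, Cpr.sort⟩
  | lref =>
    cases h₂ with
    | lref => exact ⟨.lref _, Cpr.lref, Cpr.lref⟩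
    | delta hdrop hV hlift => exact case_lref_delta ih hdrop hV hlift hL₁ hL₂
  | delta hdropa hVa hlifta =>
    cases h₂ with
    | lref =>
      obtain ⟨T, c1, c2⟩ := case_lref_delta ih hdropa hVa hlifta hL₂ hL₁
      exact ⟨T, c2, c1⟩
    | delta hdropb hVb hliftb =>
      exact case_delta_delta ih hdropa hVa hlifta hdropb hVb hliftb hL₁ hL₂
  | bind hWa hTa =>
    cases h₂ with
    | bind hWb hTb => exact case_bind_bind ih hWa hTa hWb hTb hL₁ hL₂
    | zeta hUb hlb => exact case_bind_zeta ih hWa hTa hUb hlb hL₁ hL₂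
  | zeta hUa hla =>
    cases h₂ with
    | bind hWb hTb =>
      obtain ⟨T, c1, c2⟩ := case_bind_zeta ih hWb hTb hUa hla hL₂ hL₁
      exact ⟨T, c2, c1⟩
    | zeta hUb hlb => exact case_zeta_zeta ih hUa hla hUb hlb hL₁ hL₂
  | flat hVa hTa =>
    cases h₂ with
    | flat hVb hTb => exact case_flat_flat ih hVa hTa hVb hTb hL₁ hL₂
    | beta hVb hWb hTb => exact case_flat_beta ih hVa hTa hVb hWb hTb hL₁ hL₂
    | eps hTb => exact case_flat_eps ih hVa hTa hTb hL₁ hL₂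
    | theta hVb hlb hUb hTb => exact case_flat_theta ih hVa hTa hVb hlb hUb hTb hL₁ hL₂
  | beta hVa hWa hTa =>
    cases h₂ with
    | flat hVb hTb =>
      obtain ⟨T, c1, c2⟩ := case_flat_beta ih hVb hTb hVa hWa hTa hL₂ hL₁
      exact ⟨T, c2, c1⟩
    | beta hVb hWb hTb => exact case_beta_beta ih hVa hWa hTa hVb hWb hTb hL₁ hL₂
  | eps hTa =>
    cases h₂ with
    | flat hVb hTb =>
      obtain ⟨T, c1, c2⟩ := case_flat_eps ih hVb hTb hTa hL₂ hL₁
      exact ⟨T, c2, c1⟩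
    | eps hTb => exact case_eps_eps ih hTa hTb hL₁ hL₂
  | theta hVa hla hUa hTa =>
    cases h₂ with
    | flat hVb hTb =>
      obtain ⟨T, c1, c2⟩ := case_flat_theta ih hVb hTb hVa hla hUa hTa hL₂ hL₁
      exact ⟨T, c2, c1⟩
    | theta hVb hlb hUb hTb =>
      exact case_theta_theta ih hVa hla hUa hTa hVb hlb hUb hTb hL₁ hL₂

theorem cpr_conf_lpr {L₀ L₁ L₂ : Env} {T₀ T₁ T₂ : Tm}
    (h₁ : Cpr L₀ T₀ T₁) (h₂ : Cpr L₀ T₀ T₂)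
    (hL₁ : Lpr L₀ L₁) (hL₂ : Lpr L₀ L₂) :
    ∃ T : Tm, Cpr L₁ T₁ T ∧ Cpr L₂ T₂ T :=
  conf_aux (wz L₀ + sz T₀ + 1) (Nat.lt_succ_self _) h₁ h₂ hL₁ hL₂
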